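/- For any composable maps X₀ →f₁ X₁ →f₂ X₂ →f₃ X₃ in a triangulated category, the fiber-cofiber Toda bracket equals the iterated fiber Toda bracket: ⟨f₃, f₂, f₁⟩_fc = ⟨f₃, f₂, f₁⟩_ff as subsets of T(ΣX₀, X₃). -/

import Mathlib

open CategoryTheory Category Limits Pretriangulated

variable {C : Type*} [Category C] [Preadditive C] [HasZeroObject C]
  [HasShift C ℤ] [∀ n : ℤ, (shiftFunctor C n).Additive] [Pretriangulated C]

/-- The fiber-cofiber Toda bracket `⟨f₃, f₂, f₁⟩_fc`: all composites `β ∘ Σα` where,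
for a distinguished triangle `F ⟶ X₁ ⟶ X₂ ⟶ ΣF` (so `F = Σ⁻¹C_{f₂}` and `ΣF = C_{f₂}`),
`α : X₀ ⟶ F` lifts `f₁` and `β : ΣF ⟶ X₃` extends `f₃`. -/
def fcBracket {X₀ X₁ X₂ X₃ : C} (f₁ : X₀ ⟶ X₁) (f₂ : X₁ ⟶ X₂) (f₃ : X₂ ⟶ X₃) :
    Set (X₀⟦(1:ℤ)⟧ ⟶ X₃) :=
  { ψ | ∃ (F : C) (j : F ⟶ X₁) (q : X₂ ⟶ F⟦(1:ℤ)⟧)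
      (_ : Triangle.mk j f₂ q ∈ distTriang C)
      (α : X₀ ⟶ F) (β : F⟦(1:ℤ)⟧ ⟶ X₃),
      α ≫ j = f₁ ∧ q ≫ β = f₃ ∧ ψ = α⟦(1:ℤ)⟧' ≫ β }

/-- The iterated cofiber Toda bracket `⟨f₃, f₂, f₁⟩_cc`. -/
def ccBracket {X₀ X₁ X₂ X₃ : C} (f₁ : X₀ ⟶ X₁) (f₂ : X₁ ⟶ X₂) (f₃ : X₂ ⟶ X₃) :
    Set (X₀⟦(1:ℤ)⟧ ⟶ X₃) :=
  { ψ | ∃ (Cf : C) (q : X₁ ⟶ Cf) (ι : Cf ⟶ X₀⟦(1:ℤ)⟧)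
      (_ : Triangle.mk f₁ q ι ∈ distTriang C)
      (φ : Cf ⟶ X₂), q ≫ φ = f₂ ∧ φ ≫ f₃ = ι ≫ ψ }

/-- The iterated fiber Toda bracket `⟨f₃, f₂, f₁⟩_ff`. -/
def ffBracket {X₀ X₁ X₂ X₃ : C} (f₁ : X₀ ⟶ X₁) (f₂ : X₁ ⟶ X₂) (f₃ : X₂ ⟶ X₃) :
    Set (X₀⟦(1:ℤ)⟧ ⟶ X₃) :=
  { ψ | ∃ (G : C) (j : X₃⟦(-1:ℤ)⟧ ⟶ G) (κ : G ⟶ X₂)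
      (_ : Triangle.mk j κ
        (f₃ ≫ (shiftFunctorCompIsoId C (-1:ℤ) (1:ℤ) (neg_add_cancel 1)).inv.app X₃) ∈
          distTriang C)
      (γ : X₁ ⟶ G) (δ : X₀ ⟶ X₃⟦(-1:ℤ)⟧),
      γ ≫ κ = f₂ ∧ f₁ ≫ γ = δ ≫ j ∧
      ψ = δ⟦(1:ℤ)⟧' ≫ (shiftFunctorCompIsoId C (-1:ℤ) (1:ℤ) (neg_add_cancel 1)).hom.app X₃ }

/-- The fiber-cofiber Toda bracket equals the iterated fiber Toda bracket:
`⟨f₃, f₂, f₁⟩_fc = ⟨f₃, f₂, f₁⟩_ff` as subsets of `T(ΣX₀, X₃)`. -/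
theorem fcBracket_eq_ffBracket {X₀ X₁ X₂ X₃ : C}
    (f₁ : X₀ ⟶ X₁) (f₂ : X₁ ⟶ X₂) (f₃ : X₂ ⟶ X₃) :
    fcBracket f₁ f₂ f₃ = ffBracket f₁ f₂ f₃ := by
  have hih : ∀ (h1 h2 : (-1:ℤ) + 1 = 0),
      (shiftFunctorCompIsoId C (-1:ℤ) (1:ℤ) h1).inv.app X₃ ≫
        (shiftFunctorCompIsoId C (-1:ℤ) (1:ℤ) h2).hom.app X₃ = 𝟙 X₃ :=
    fun h1 h2 => Iso.inv_hom_id_app _ _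
  ext ψ
  constructor
  · rintro ⟨F, j, q, hT₁, α, β, hα, hβ, rfl⟩
    obtain ⟨D, g, h, hD⟩ := distinguished_cocone_triangle f₃
    let j' : X₃⟦(-1:ℤ)⟧ ⟶ D⟦(-1:ℤ)⟧ := (Triangle.mk f₃ g h).invRotate.invRotate.mor₁
    let κ : D⟦(-1:ℤ)⟧ ⟶ X₂ := (Triangle.mk f₃ g h).invRotate.invRotate.mor₂
    have hT₂ : Triangle.mk j' κ
        (f₃ ≫ (shiftFunctorCompIsoId C (-1:ℤ) (1:ℤ) (neg_add_cancel 1)).inv.app X₃) ∈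
        distTriang C := inv_rot_of_distTriang _ (inv_rot_of_distTriang _ hD)
    set a : F ⟶ X₃⟦(-1:ℤ)⟧ := (shiftFunctor C (1:ℤ)).preimage
      (β ≫ (shiftFunctorCompIsoId C (-1:ℤ) (1:ℤ) (neg_add_cancel 1)).inv.app X₃) with ha
    have haim : a⟦(1:ℤ)⟧' =
        β ≫ (shiftFunctorCompIsoId C (-1:ℤ) (1:ℤ) (neg_add_cancel 1)).inv.app X₃ :=
      (shiftFunctor C (1:ℤ)).map_preimage _
    obtain ⟨γ, hγ₁, hγ₂⟩ := complete_distinguished_triangle_morphism₂ (Triangle.mk j f₂ q) _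
      hT₁ hT₂ a (𝟙 X₂) (by
        show q ≫ a⟦(1:ℤ)⟧' = 𝟙 X₂ ≫
          (f₃ ≫ (shiftFunctorCompIsoId C (-1:ℤ) (1:ℤ) (neg_add_cancel 1)).inv.app X₃)
        rw [haim, ← assoc, hβ, id_comp])
    replace hγ₁ : j ≫ γ = a ≫ j' := hγ₁
    replace hγ₂ : f₂ ≫ 𝟙 X₂ = γ ≫ κ := hγ₂
    refine ⟨D⟦(-1:ℤ)⟧, j', κ, hT₂, γ, α ≫ a, ?_, ?_, ?_⟩
    · erw [← hγ₂, comp_id]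
    · erw [← hα, assoc, assoc, hγ₁]
    · rw [Functor.map_comp, assoc, haim, assoc, hih, comp_id]
  · rintro ⟨G, j', κ, hT₂, γ, δ, hγκ, hδ, rfl⟩
    obtain ⟨D, g, h, hD⟩ := distinguished_cocone_triangle f₂
    let j : D⟦(-1:ℤ)⟧ ⟶ X₁ := (Triangle.mk f₂ g h).invRotate.mor₁
    let q : X₂ ⟶ D⟦(-1:ℤ)⟧⟦(1:ℤ)⟧ := (Triangle.mk f₂ g h).invRotate.mor₃
    have hT₁ : Triangle.mk j f₂ q ∈ distTriang C := inv_rot_of_distTriang _ hD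
    obtain ⟨a, haj, haq⟩ := complete_distinguished_triangle_morphism₁ (Triangle.mk j f₂ q)
      (Triangle.mk j' κ (f₃ ≫ (shiftFunctorCompIsoId C (-1:ℤ) (1:ℤ)
        (neg_add_cancel 1)).inv.app X₃)) hT₁ hT₂ γ (𝟙 X₂)
      (by show f₂ ≫ 𝟙 X₂ = γ ≫ κ; rw [comp_id, hγκ])
    let a' : D⟦(-1:ℤ)⟧ ⟶ X₃⟦(-1:ℤ)⟧ := a
    replace haj : j ≫ γ = a' ≫ j' := haj
    replace haq : q ≫ a'⟦(1:ℤ)⟧' =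
        f₃ ≫ (shiftFunctorCompIsoId C (-1:ℤ) (1:ℤ) (neg_add_cancel 1)).inv.app X₃ :=
      haq.trans (id_comp _)
    have h0 : j' ≫ κ = 0 := comp_distTriang_mor_zero₁₂ _ hT₂
    have hf₁f₂ : f₁ ≫ (Triangle.mk j f₂ q).mor₂ = 0 := by
      show f₁ ≫ f₂ = 0
      rw [← hγκ, ← assoc, hδ, assoc, h0, comp_zero]
    obtain ⟨α₀', hα₀⟩ := Triangle.coyoneda_exact₂ _ hT₁ f₁ hf₁f₂
    let α₀ : X₀ ⟶ D⟦(-1:ℤ)⟧ := α₀'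
    replace hα₀ : f₁ = α₀ ≫ j := hα₀
    -- the morphism of triangles (a', γ, 𝟙)
    let φ : Triangle.mk j f₂ q ⟶ Triangle.mk j' κ (f₃ ≫ (shiftFunctorCompIsoId C (-1:ℤ) (1:ℤ)
        (neg_add_cancel 1)).inv.app X₃) :=
      { hom₁ := a'
        hom₂ := γ
        hom₃ := 𝟙 X₂
        comm₁ := haj
        comm₂ := by show f₂ ≫ 𝟙 X₂ = γ ≫ κ; rw [comp_id, hγκ]
        comm₃ := by
          show q ≫ a'⟦(1:ℤ)⟧' = 𝟙 X₂ ≫ (f₃ ≫ _)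
          rw [haq, id_comp] }
    have hnm : (Triangle.mk j f₂ q).invRotate.mor₁ ≫ a' =
        (Triangle.mk j' κ (f₃ ≫ (shiftFunctorCompIsoId C (-1:ℤ) (1:ℤ)
          (neg_add_cancel 1)).inv.app X₃)).invRotate.mor₁ := by
      have h1 := ((invRotate C).map φ).comm₁
      have h2 : (Triangle.mk j f₂ q).invRotate.mor₁ ≫ a' =
          (𝟙 X₂)⟦(-1:ℤ)⟧' ≫ (Triangle.mk j' κ (f₃ ≫ (shiftFunctorCompIsoId C (-1:ℤ) (1:ℤ)
            (neg_add_cancel 1)).inv.app X₃)).invRotate.mor₁ := h1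
      erw [h2, CategoryTheory.Functor.map_id, id_comp]
    have hh : (α₀ ≫ a' - δ) ≫ j' = 0 := by
      rw [Preadditive.sub_comp, assoc, ← haj, ← assoc, ← hα₀, hδ, sub_self]
    obtain ⟨ε, hε⟩ := Triangle.coyoneda_exact₂ _ (inv_rot_of_distTriang _ hT₂)
      (α₀ ≫ a' - δ) hh
    replace hε : α₀ ≫ a' - δ = ε ≫ (Triangle.mk j' κ (f₃ ≫ (shiftFunctorCompIsoId C (-1:ℤ) (1:ℤ)
        (neg_add_cancel 1)).inv.app X₃)).invRotate.mor₁ := hε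
    have hzero : (Triangle.mk j f₂ q).invRotate.mor₁ ≫ j = 0 :=
      comp_distTriang_mor_zero₁₂ _ (inv_rot_of_distTriang _ hT₁)
    set α := α₀ - (ε ≫ (Triangle.mk j f₂ q).invRotate.mor₁ : X₀ ⟶ D⟦(-1:ℤ)⟧) with hαdef
    have hαj : α ≫ j = f₁ := by
      erw [hαdef, Preadditive.sub_comp, assoc, hzero, comp_zero, sub_zero, hα₀]
    have hαa : α ≫ a' = δ := by
      erw [hαdef, Preadditive.sub_comp, assoc, hnm, ← hε]
      abel
    refine ⟨D⟦(-1:ℤ)⟧, j, q, hT₁, α,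
      a'⟦(1:ℤ)⟧' ≫ (shiftFunctorCompIsoId C (-1:ℤ) (1:ℤ) (neg_add_cancel 1)).hom.app X₃,
      hαj, ?_, ?_⟩
    · rw [← assoc, haq, assoc, hih, comp_id]
    · rw [← hαa, Functor.map_comp, assoc]
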